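/- Let B be a commutative k-domain, δ a nontrivial exponential map on B, x a local slice of δ with n = deg_δ(x), and c = D_n(x). Then the localization B[c^{-1}] equals B^δ[c^{-1}][x], a polynomial ring in x over B^δ[c^{-1}]. -/

import Mathlib

open Polynomial

variable (k : Type) [Field k] (B : Type) [CommRing B] [IsDomain B] [Algebra k B]

/-- An exponential map on a `k`-domain `B`. -/
def IsExpMap (δ : B →ₐ[k] B[X]) : Prop :=
  (∀ b : B, (δ b).eval 0 = b) ∧
  (∀ b : B, (δ b).map δ.toRingHom = (δ b).eval₂ (C.comp C) (C X + X))

/-- The trivial exponential map property. -/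
def IsTrivialExp (δ : B →ₐ[k] B[X]) : Prop := ∀ b : B, δ b = C b

/-- The ring of δ-invariants, as a subalgebra. -/
noncomputable def expInv (δ : B →ₐ[k] B[X]) : Subalgebra k B :=
  AlgHom.equalizer δ CAlgHom

/-- A local slice: an element of minimal positive δ-degree. -/
def IsLocalSlice (δ : B →ₐ[k] B[X]) (x : B) : Prop :=
  0 < (δ x).degree ∧ ∀ y : B, 0 < (δ y).degree → (δ x).degree ≤ (δ y).degree

/-- A slice: a local slice whose top iterative derivative is a unit. -/
def IsSlice (δ : B →ₐ[k] B[X]) (x : B) : Prop :=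
  IsLocalSlice k B δ x ∧ IsUnit ((δ x).coeff (δ x).natDegree)

/-- δ admits a slice. -/
def HasSlice (δ : B →ₐ[k] B[X]) : Prop := ∃ x : B, IsSlice k B δ x

/-- Makar-Limanov invariant. -/
noncomputable def ML : Subalgebra k B :=
  ⨅ δ ∈ {δ : B →ₐ[k] B[X] | IsExpMap k B δ}, expInv k B δ

/-- Makar-Limanov–Freudenburg invariant. -/
noncomputable def MLstar : Subalgebra k B :=
  ⨅ δ ∈ {δ : B →ₐ[k] B[X] | IsExpMap k B δ ∧ HasSlice k B δ}, expInv k B δ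

/-- Rigidity: every exponential map is trivial. -/
def IsRigid : Prop := ∀ δ : B →ₐ[k] B[X], IsExpMap k B δ → IsTrivialExp k B δ

/-- `B` has transcendence degree `n` over `k`. -/
def HasTrdeg (n : ℕ) : Prop := ∃ x : Fin n → B, IsTranscendenceBasis k x


theorem myL0 (p : ℕ) (hp : p.Prime) (e a : ℕ) :
    (p ^ e * a).choose (p ^ e) ≡ a [MOD p] := by
  haveI : Fact p.Prime := ⟨hp⟩
  induction e with
  | zero => simpa using Nat.ModEq.refl a
  | succ e ih =>
      have h := Choose.choose_modEq_choose_mod_mul_choose_div_nat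
        (n := p ^ (e+1) * a) (k := p ^ (e+1)) (p := p)
      have hp1 : 0 < p := hp.pos
      have e1 : p ^ (e+1) * a = p * (p ^ e * a) := by ring
      have e2 : p ^ (e+1) = p * p ^ e := by ring
      have h1 : (p ^ (e+1) * a) % p = 0 := by rw [e1]; exact Nat.mul_mod_right p _
      have h2 : (p ^ (e+1)) % p = 0 := by rw [e2]; exact Nat.mul_mod_right p _
      have h3 : (p ^ (e+1) * a) / p = p ^ e * a := by rw [e1]; exact Nat.mul_div_cancel_left _ hp1
      have h4 : (p ^ (e+1)) / p = p ^ e := by rw [e2]; exact Nat.mul_div_cancel_left _ hp1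
      rw [h1, h2, h3, h4] at h
      exact h.trans (by simpa using ih)

theorem myL2 (p : ℕ) (hp : p.Prime) (e : ℕ) (m : ℕ)
    (hm : ∀ j, 0 < j → j < p ^ e → p ∣ m.choose j) : p ^ e ∣ m := by
  induction e with
  | zero => simpa using one_dvd m
  | succ e ih =>
      have hpe : p ^ e < p ^ (e+1) := Nat.pow_lt_pow_right hp.one_lt (Nat.lt_succ_self e)
      obtain ⟨m', rfl⟩ := ih (fun j hj hj' => hm j hj (hj'.trans hpe))
      rcases Nat.eq_zero_or_pos m' with rfl | hm'
      · simp
      · have hpos : 0 < p ^ e := Nat.pow_pos hp.pos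
        have hdvd : p ∣ (p ^ e * m').choose (p ^ e) := hm _ hpos hpe
        have hmod : (p ^ e * m').choose (p ^ e) % p = m' % p := myL0 p hp e m'
        have hpm : p ∣ m' := by
          have h0 : (p ^ e * m').choose (p ^ e) % p = 0 := Nat.mod_eq_zero_of_dvd hdvd
          exact Nat.dvd_of_mod_eq_zero (by omega)
        obtain ⟨m'', rfl⟩ := hpm
        exact ⟨m'', by ring⟩

theorem myL1 (p : ℕ) (hp : p.Prime) (n : ℕ) (hn : 0 < n)
    (h : ∀ j, 0 < j → j < n → p ∣ n.choose j) : ∃ e, n = p ^ e := by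
  rcases Nat.lt_or_ge n 2 with h2 | h2
  · exact ⟨0, by rw [pow_zero]; omega⟩
  · obtain ⟨e, hple, hplt⟩ : ∃ e, p ^ e ≤ n ∧ n < p ^ (e+1) :=
      ⟨Nat.log p n, Nat.pow_log_le_self p (by omega), Nat.lt_pow_succ_log_self hp.one_lt n⟩
    have hpos : 0 < p ^ e := Nat.pow_pos hp.pos
    obtain ⟨a, han⟩ := myL2 p hp e n
      (fun j hj hj' => h j hj (lt_of_lt_of_le hj' hple))
    have ha : 0 < a := by
      rcases Nat.eq_zero_or_pos a with rfl | hpa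
      · omega
      · exact hpa
    have ha1 : a = 1 := by
      by_contra hne
      have ha2 : 2 ≤ a := by omega
      have hlt : p ^ e < n := by nlinarith
      have hdvd2 : p ∣ n.choose (p ^ e) := h _ hpos hlt
      have hmod : n.choose (p ^ e) % p = a % p := by
        rw [han]; exact myL0 p hp e a
      have hpa : p ∣ a := by
        have h0 : n.choose (p ^ e) % p = 0 := Nat.mod_eq_zero_of_dvd hdvd2
        exact Nat.dvd_of_mod_eq_zero (by omega)
      have : p ≤ a := Nat.le_of_dvd ha hpa
      have halt : a < p := by
        by_contra hge
        push_neg at hge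
        have hle2 : p ^ (e + 1) ≤ p ^ e * a := by
          rw [pow_succ]; exact Nat.mul_le_mul_left _ hge
        rw [← han] at hle2
        omega
      omega
    exact ⟨e, by rw [han, ha1, mul_one]⟩

theorem myLC (p : ℕ) (hp : p.Prime) (n m : ℕ) (hn : 0 < n)
    (hyn : ∀ j, 0 < j → j < n → p ∣ n.choose j)
    (hym : ∀ j, 0 < j → j < n → p ∣ m.choose j) : n ∣ m := by
  rcases Nat.lt_or_ge n 2 with h2 | h2
  · have : n = 1 := by omega
    simp [this]
  · obtain ⟨e, rfl⟩ := myL1 p hp n hn hyn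
    exact myL2 p hp e m hym

section DeltaLemmas

variable {k : Type} [Field k] {B : Type} [CommRing B] [IsDomain B] [Algebra k B]
  (δ : B →ₐ[k] B[X])

theorem myKI (hδ : IsExpMap k B δ) (b : B) (i ℓ : ℕ) :
    (δ ((δ b).coeff i)).coeff ℓ = (((i+ℓ).choose i : ℕ) : B) * (δ b).coeff (i+ℓ) := by
  have h := congrArg (fun q => (Polynomial.coeff (Polynomial.coeff q i) ℓ)) (hδ.2 b)
  simp only [Polynomial.coeff_map] at h
  rw [Polynomial.eval₂_eq_sum, Polynomial.sum_def, Polynomial.finset_sum_coeff,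
    Polynomial.finset_sum_coeff] at h
  have key : ∀ j ∈ (δ b).support,
      (((C.comp C) ((δ b).coeff j) * (C X + X) ^ j).coeff i).coeff ℓ
        = if j = i + ℓ then (((i+ℓ).choose i : ℕ) : B) * (δ b).coeff (i+ℓ) else 0 := by
    intro j _
    rw [RingHom.comp_apply, add_comm (C X) X, Polynomial.coeff_C_mul,
      Polynomial.coeff_X_add_C_pow, Polynomial.coeff_C_mul,
      Polynomial.coeff_mul_natCast, Polynomial.coeff_X_pow]
    by_cases hj : j = i + ℓ
    · subst hj
      rw [if_pos rfl, if_pos (by omega)]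
      ring
    · rw [if_neg hj]
      by_cases hij : i ≤ j
      · rw [if_neg (by omega : ¬ ℓ = j - i)]
        ring
      · have h0 : j.choose i = 0 := Nat.choose_eq_zero_of_lt (by omega)
        simp [h0]
  rw [Finset.sum_congr rfl key, Finset.sum_ite_eq' (δ b).support] at h
  by_cases hmem : i + ℓ ∈ (δ b).support
  · rw [if_pos hmem] at h; exact h
  · rw [if_neg hmem] at h
    rw [Polynomial.notMem_support_iff.mp hmem, mul_zero]
    exact h

theorem myCoeff0 (hδ : IsExpMap k B δ) (b : B) : (δ b).coeff 0 = b := by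
  rw [Polynomial.coeff_zero_eq_eval_zero]; exact hδ.1 b

theorem myDegLe0 (hδ : IsExpMap k B δ) (b : B) (h : (δ b).degree ≤ 0) : δ b = C b := by
  have h1 := Polynomial.eq_C_of_degree_le_zero h
  rw [myCoeff0 δ hδ] at h1
  exact h1

theorem myLeadInv (hδ : IsExpMap k B δ) (b : B) :
    δ ((δ b).coeff (δ b).natDegree) = C ((δ b).coeff (δ b).natDegree) := by
  ext ℓ
  rcases Nat.eq_zero_or_pos ℓ with rfl | hl
  · rw [myCoeff0 δ hδ, Polynomial.coeff_C, if_pos rfl]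
  · rw [myKI δ hδ, Polynomial.coeff_C, if_neg (by omega),
      Polynomial.coeff_eq_zero_of_natDegree_lt (by omega), mul_zero]

theorem myCoeffDegLe (hδ : IsExpMap k B δ) (b : B) (i : ℕ) :
    (δ ((δ b).coeff i)).degree ≤ (((δ b).natDegree - i : ℕ) : WithBot ℕ) := by
  rw [Polynomial.degree_le_iff_coeff_zero]
  intro ℓ hl
  have hl' : (δ b).natDegree - i < ℓ := by exact_mod_cast hl
  rw [myKI δ hδ, Polynomial.coeff_eq_zero_of_natDegree_lt (by omega), mul_zero]

theorem myChooseZero (hδ : IsExpMap k B δ) (x : B) (hx : IsLocalSlice k B δ x)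
    (b : B) (hb : 0 < (δ b).degree) (j : ℕ) (hj0 : 0 < j) (hjn : j < (δ x).natDegree) :
    (((δ b).natDegree.choose j : ℕ) : B) = 0 := by
  have hbne : δ b ≠ 0 := fun h => by simp [h] at hb
  have hxne : δ x ≠ 0 := fun h => by
    have := hx.1; rw [h] at this; simp at this
  set m := (δ b).natDegree with hm
  have hnm : (δ x).natDegree ≤ m := by
    apply Polynomial.natDegree_le_natDegree
    exact hx.2 b hb
  have hjm : j ≤ m := by omega
  have hdegle : (δ ((δ b).coeff (m - j))).degree ≤ (j : WithBot ℕ) := by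
    have := myCoeffDegLe δ hδ b (m - j)
    have heq : m - (m - j) = j := by omega
    rwa [← hm, heq] at this
  have hinv : δ ((δ b).coeff (m - j)) = C ((δ b).coeff (m - j)) := by
    apply myDegLe0 δ hδ
    by_contra hpos
    push_neg at hpos
    have h1 : (δ x).degree ≤ (δ ((δ b).coeff (m - j))).degree := hx.2 _ hpos
    have h2 : (δ x).degree = ((δ x).natDegree : WithBot ℕ) := Polynomial.degree_eq_natDegree hxne
    have h3 := le_trans h1 hdegle
    rw [h2] at h3
    have : (δ x).natDegree ≤ j := by exact_mod_cast h3
    omega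
  have hcoeffj := congrArg (fun q => q.coeff j) hinv
  simp only [Polynomial.coeff_C, if_neg (by omega : ¬ j = 0)] at hcoeffj
  rw [myKI δ hδ] at hcoeffj
  have hsum : m - j + j = m := by omega
  rw [hsum] at hcoeffj
  have hlead : (δ b).coeff m ≠ 0 := by
    rw [hm]
    exact Polynomial.leadingCoeff_ne_zero.mpr hbne
  rcases mul_eq_zero.mp hcoeffj with h | h
  · rwa [Nat.choose_symm hjm] at h
  · exact absurd h hlead

theorem myDvd (hδ : IsExpMap k B δ) (x : B) (hx : IsLocalSlice k B δ x)
    (b : B) (hb : 0 < (δ b).degree) : (δ x).natDegree ∣ (δ b).natDegree := by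
  set n := (δ x).natDegree with hn
  set m := (δ b).natDegree with hm
  have hn1 : 0 < n := by
    rw [hn]
    exact Polynomial.natDegree_pos_iff_degree_pos.mpr hx.1
  rcases Nat.lt_or_ge n 2 with h2 | h2
  · have : n = 1 := by omega
    simp [this]
  · have hqn : ∀ j, 0 < j → j < n → ((n.choose j : ℕ) : B) = 0 := fun j hj0 hjn =>
      myChooseZero δ hδ x hx x hx.1 j hj0 hjn
    have hqm : ∀ j, 0 < j → j < n → ((m.choose j : ℕ) : B) = 0 := fun j hj0 hjn =>
      myChooseZero δ hδ x hx b hb j hj0 hjn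
    haveI : CharP B (ringChar B) := ringChar.charP B
    rcases CharP.char_is_prime_or_zero B (ringChar B) with hp | hp0
    · exact myLC (ringChar B) hp n m hn1
        (fun j hj0 hjn => (ringChar.spec B _).mp (hqn j hj0 hjn))
        (fun j hj0 hjn => (ringChar.spec B _).mp (hqm j hj0 hjn))
    · exfalso
      have h1 := hqn 1 (by omega) (by omega)
      rw [Nat.choose_one_right] at h1
      have h2 := (ringChar.spec B n).mp h1
      rw [hp0] at h2
      have : n = 0 := Nat.eq_zero_of_zero_dvd h2
      omega

end DeltaLemmas

theorem localization_at_plinth_is_polynomial_ring (δ : B →ₐ[k] B[X]) (hδ : IsExpMap k B δ)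
    (hnt : ¬ IsTrivialExp k B δ) (x : B) (hx : IsLocalSlice k B δ x)
    (c : B) (hc : c = (δ x).coeff (δ x).natDegree) :
    Function.Bijective
      (Polynomial.aeval (algebraMap B (Localization.Away c) x) :
        Polynomial (Algebra.adjoin k
          ((algebraMap B (Localization.Away c) '' (expInv k B δ : Set B)) ∪
            {Ring.inverse (algebraMap B (Localization.Away c) c)})) →ₐ[Algebra.adjoin k
          ((algebraMap B (Localization.Away c) '' (expInv k B δ : Set B)) ∪
            {Ring.inverse (algebraMap B (Localization.Away c) c)})]
        Localization.Away c) := by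
  classical
  set L := Localization.Away c with hL
  set φ := algebraMap B L with hφ
  set n := (δ x).natDegree with hn
  have hxne : δ x ≠ 0 := fun h => by
    have := hx.1; rw [h] at this; simp at this
  have hn1 : 0 < n := Polynomial.natDegree_pos_iff_degree_pos.mpr hx.1
  have hxdeg : (δ x).degree = (n : WithBot ℕ) := Polynomial.degree_eq_natDegree hxne
  have hcne : c ≠ 0 := by
    rw [hc]; exact Polynomial.leadingCoeff_ne_zero.mpr hxne
  have hcinv : δ c = C c := by rw [hc]; exact myLeadInv δ hδ x
  have hcmem : c ∈ expInv k B δ := by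
    rw [expInv, AlgHom.mem_equalizer, hcinv]; rfl
  have hmemInv : ∀ a : B, a ∈ expInv k B δ → δ a = C a := by
    intro a ha
    rw [expInv, AlgHom.mem_equalizer] at ha
    exact ha
  have hInvMem : ∀ a : B, δ a = C a → a ∈ expInv k B δ := by
    intro a ha
    rw [expInv, AlgHom.mem_equalizer, ha]; rfl
  have hφinj : Function.Injective φ :=
    IsLocalization.injective L (powers_le_nonZeroDivisors_of_noZeroDivisors hcne)
  have hcunit : IsUnit (φ c) := IsLocalization.Away.algebraMap_isUnit c
  set u : L := Ring.inverse (φ c) with hu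
  have huc : u * φ c = 1 := Ring.inverse_mul_cancel _ hcunit
  set R := Algebra.adjoin k ((φ '' (expInv k B δ : Set B)) ∪ {u}) with hR
  set F := (Polynomial.aeval (φ x) : Polynomial R →ₐ[R] L) with hF
  set T := F.range with hT
  have hmemT : ∀ z : L, z ∈ R → z ∈ T := by
    intro z hz
    have : F (Polynomial.C ⟨z, hz⟩) = z := by
      rw [Polynomial.aeval_C, Subalgebra.algebraMap_eq]
      rfl
    exact ⟨Polynomial.C ⟨z, hz⟩, this⟩
  have hxT : φ x ∈ T := ⟨Polynomial.X, Polynomial.aeval_X _⟩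
  have huR : u ∈ R := Algebra.subset_adjoin (Set.mem_union_right _ rfl)
  have hAR : ∀ a : B, a ∈ expInv k B δ → φ a ∈ R := fun a ha =>
    Algebra.subset_adjoin (Set.mem_union_left _ ⟨a, ha, rfl⟩)
  -- main generation lemma
  have main : ∀ M : ℕ, ∀ b : B, (δ b).natDegree ≤ M → φ b ∈ T := by
    intro M
    induction M with
    | zero =>
        intro b hb
        have hdeg : (δ b).degree ≤ 0 := by
          rcases eq_or_ne (δ b) 0 with h | h
          · rw [h, Polynomial.degree_zero]; exact bot_le
          · rw [Polynomial.degree_eq_natDegree h, Nat.le_zero.mp hb]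
            exact le_rfl
        exact hmemT _ (hAR b (hInvMem b (myDegLe0 δ hδ b hdeg)))
    | succ M ih =>
        intro b hb
        by_cases h0 : (δ b).degree ≤ 0
        · exact hmemT _ (hAR b (hInvMem b (myDegLe0 δ hδ b h0)))
        · push_neg at h0
          have hbne : δ b ≠ 0 := fun h => by rw [h] at h0; simp at h0
          set m := (δ b).natDegree with hm
          have hm1 : 0 < m := Polynomial.natDegree_pos_iff_degree_pos.mpr h0
          obtain ⟨q, hq⟩ := myDvd δ hδ x hx b h0
          set f := (δ b).coeff m with hf
          have hfne : f ≠ 0 := Polynomial.leadingCoeff_ne_zero.mpr hbne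
          have hfinv : δ f = C f := myLeadInv δ hδ b
          have hfmem : f ∈ expInv k B δ := hInvMem f hfinv
          set b₁ := c ^ q * b - f * x ^ q with hb₁
          set P := C (c ^ q) * δ b with hP
          set Q := C f * (δ x) ^ q with hQ
          have hδb₁ : δ b₁ = P - Q := by
            rw [hb₁, map_sub, map_mul, map_mul, map_pow, hcinv, hfinv, map_pow, hP, hQ,
              ← Polynomial.C_pow]
          have hq0 : q ≠ 0 := by
            rintro rfl
            rw [mul_zero] at hq
            omega
          have hPne : P ≠ 0 := mul_ne_zero (fun h => hcne (by
            have := Polynomial.C_eq_zero.mp h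
            exact pow_eq_zero_iff hq0 |>.mp this)) hbne
          have hQne : Q ≠ 0 := mul_ne_zero
            (fun h => hfne (Polynomial.C_eq_zero.mp h)) (pow_ne_zero q hxne)
          have hdegP : P.degree = (m : WithBot ℕ) := by
            rw [hP, Polynomial.degree_C_mul (pow_ne_zero q hcne)]
            exact Polynomial.degree_eq_natDegree hbne
          have hdegQ : Q.degree = (m : WithBot ℕ) := by
            rw [Polynomial.degree_eq_natDegree hQne, hQ, Polynomial.natDegree_C_mul hfne,
              Polynomial.natDegree_pow]
            exact Nat.cast_inj.mpr (by rw [hm, hq, Nat.mul_comm])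
          have hlc : P.leadingCoeff = Q.leadingCoeff := by
            rw [hP, hQ, Polynomial.leadingCoeff_mul, Polynomial.leadingCoeff_mul,
              Polynomial.leadingCoeff_pow, Polynomial.leadingCoeff_C,
              Polynomial.leadingCoeff_C]
            have h1 : (δ b).leadingCoeff = f := rfl
            have h2 : (δ x).leadingCoeff = c := hc.symm
            rw [h1, h2]
            ring
          have hsub : (P - Q).degree < (m : WithBot ℕ) := by
            have := Polynomial.degree_sub_lt (hdegP.trans hdegQ.symm) hPne hlc
            rwa [hdegP] at this
          have hb1le : (δ b₁).natDegree ≤ M := by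
            rcases eq_or_ne (δ b₁) 0 with h | h
            · rw [h]; simp
            · have hlt : (δ b₁).natDegree < m :=
                (Polynomial.natDegree_lt_iff_degree_lt h).mpr (by rw [hδb₁]; exact hsub)
              omega
          have hφb₁ : φ b₁ ∈ T := ih b₁ hb1le
          have hkey : φ b = u ^ q * (φ b₁ + φ f * (φ x) ^ q) := by
            have h1 : φ b₁ + φ f * (φ x) ^ q = φ c ^ q * φ b := by
              rw [← map_pow, ← map_mul, ← map_pow, ← map_mul, ← map_add, hb₁]
              ring_nf
            rw [h1, ← mul_assoc, ← mul_pow, huc, one_pow, one_mul]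
          rw [hkey]
          exact mul_mem (pow_mem (hmemT u huR) q)
            (add_mem hφb₁ (mul_mem (hmemT _ (hAR f hfmem)) (pow_mem hxT q)))
  constructor
  · -- injectivity
    rw [injective_iff_map_eq_zero]
    intro p hFp
    by_contra hp0
    set d := p.natDegree with hd
    have hlead : p.coeff d ≠ 0 := Polynomial.leadingCoeff_ne_zero.mpr hp0
    -- denominators
    have hSmem : ∀ z : L, z ∈ R → ∃ (N : ℕ) (a : B), a ∈ expInv k B δ ∧ z * (φ c) ^ N = φ a := by
      intro z hz
      induction hz using Algebra.adjoin_induction with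
      | mem w hw =>
          rcases hw with ⟨a, ha, rfl⟩ | hw
          · exact ⟨0, a, ha, by rw [pow_zero, mul_one]⟩
          · rw [Set.mem_singleton_iff] at hw
            exact ⟨1, 1, one_mem _, by rw [hw, pow_one, huc, map_one]⟩
      | algebraMap r =>
          refine ⟨0, algebraMap k B r, Subalgebra.algebraMap_mem _ r, ?_⟩
          rw [pow_zero, mul_one, ← IsScalarTower.algebraMap_apply]
      | add z₁ z₂ h₁ h₂ ih₁ ih₂ =>
          obtain ⟨N₁, a₁, ha₁, he₁⟩ := ih₁
          obtain ⟨N₂, a₂, ha₂, he₂⟩ := ih₂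
          refine ⟨N₁ + N₂, a₁ * c ^ N₂ + a₂ * c ^ N₁,
            add_mem (mul_mem ha₁ (pow_mem hcmem N₂)) (mul_mem ha₂ (pow_mem hcmem N₁)), ?_⟩
          rw [map_add, map_mul, map_mul, map_pow, map_pow, ← he₁, ← he₂, pow_add]
          ring
      | mul z₁ z₂ h₁ h₂ ih₁ ih₂ =>
          obtain ⟨N₁, a₁, ha₁, he₁⟩ := ih₁
          obtain ⟨N₂, a₂, ha₂, he₂⟩ := ih₂
          refine ⟨N₁ + N₂, a₁ * a₂, mul_mem ha₁ ha₂, ?_⟩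
          rw [map_mul, ← he₁, ← he₂, pow_add]
          ring
    have hrep : ∀ i : ℕ, ∃ (N : ℕ) (a : B), a ∈ expInv k B δ ∧
        ((p.coeff i : L)) * (φ c) ^ N = φ a := fun i => hSmem _ (p.coeff i).2
    choose Nf af haf heq using hrep
    set N := (Finset.range (d + 1)).sup Nf with hN
    set a' : ℕ → B := fun i => af i * c ^ (N - Nf i) with ha'
    have ha'mem : ∀ i, a' i ∈ expInv k B δ := fun i =>
      mul_mem (haf i) (pow_mem hcmem _)
    have hrepN : ∀ i ∈ Finset.range (d + 1), ((p.coeff i : L)) * (φ c) ^ N = φ (a' i) := by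
      intro i hi
      have hle : Nf i ≤ N := Finset.le_sup hi
      have : N = Nf i + (N - Nf i) := by omega
      rw [this, pow_add, ← mul_assoc, heq i, ha', map_mul, map_pow]
    set w := ∑ i ∈ Finset.range (d + 1), a' i * x ^ i with hw
    have hφw : φ w = 0 := by
      rw [hw, map_sum]
      have : ∀ i ∈ Finset.range (d + 1), φ (a' i * x ^ i)
          = ((p.coeff i : L)) * (φ c) ^ N * (φ x) ^ i := by
        intro i hi
        rw [map_mul, map_pow, ← hrepN i hi]
      rw [Finset.sum_congr rfl this]
      have hsum : ∑ i ∈ Finset.range (d + 1), ((p.coeff i : L)) * (φ c) ^ N * (φ x) ^ i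
          = (φ c) ^ N * ∑ i ∈ Finset.range (d + 1), ((p.coeff i : L)) * (φ x) ^ i := by
        rw [Finset.mul_sum]
        exact Finset.sum_congr rfl fun i _ => by ring
      rw [hsum]
      have haev : ∑ i ∈ Finset.range (d + 1), ((p.coeff i : L)) * (φ x) ^ i = F p := by
        rw [hF, Polynomial.aeval_eq_sum_range]
        exact Finset.sum_congr rfl fun i _ => by
          rw [Algebra.smul_def, Subalgebra.algebraMap_eq]; rfl
      rw [haev, hFp, mul_zero]
    have hw0 : w = 0 := hφinj (by rw [hφw, map_zero])
    have hδw : δ w = 0 := by rw [hw0, map_zero]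
    have hcoeff : (δ w).coeff (d * n) = a' d * c ^ d := by
      rw [hw, map_sum]
      rw [Polynomial.finset_sum_coeff]
      have hterm : ∀ i ∈ Finset.range (d + 1),
          (δ (a' i * x ^ i)).coeff (d * n) = if i = d then a' d * c ^ d else 0 := by
        intro i hi
        rw [Finset.mem_range] at hi
        rw [map_mul, map_pow, hmemInv _ (ha'mem i), Polynomial.coeff_C_mul]
        by_cases hid : i = d
        · rw [hid, if_pos rfl]
          have hnd : ((δ x) ^ d).natDegree = d * n := by
            rw [Polynomial.natDegree_pow]
          have hcd : ((δ x) ^ d).coeff (d * n) = c ^ d := by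
            rw [← hnd, Polynomial.coeff_natDegree, Polynomial.leadingCoeff_pow]
            have h2 : (δ x).leadingCoeff = c := hc.symm
            rw [h2]
          rw [hcd]
        · rw [if_neg hid]
          have hlt : ((δ x) ^ i).natDegree < d * n := by
            rw [Polynomial.natDegree_pow, ← hn]
            exact (Nat.mul_lt_mul_right hn1).mpr (by omega)
          rw [Polynomial.coeff_eq_zero_of_natDegree_lt hlt, mul_zero]
      rw [Finset.sum_congr rfl hterm, Finset.sum_ite_eq' (Finset.range (d + 1))]
      rw [if_pos (Finset.self_mem_range_succ d)]
    rw [hδw, Polynomial.coeff_zero] at hcoeff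
    have had : a' d = 0 := by
      rcases mul_eq_zero.mp hcoeff.symm with h | h
      · exact h
      · exact absurd h (pow_ne_zero d hcne)
    have hzero : ((p.coeff d : L)) * (φ c) ^ N = 0 := by
      rw [hrepN d (Finset.self_mem_range_succ d), had, map_zero]
    have : (p.coeff d : L) = 0 := ((hcunit.pow N).mul_left_eq_zero).mp hzero
    exact hlead (by exact_mod_cast this)
  · -- surjectivity
    intro z
    obtain ⟨⟨b, s⟩, hs⟩ := IsLocalization.surj (Submonoid.powers c) z
    obtain ⟨N, hsN⟩ := s.2
    have hsN' : c ^ N = (s : B) := hsN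
    have hz : z = φ b * u ^ N := by
      have h1 : z * φ c ^ N = φ b := by
        rw [← map_pow, hsN']
        exact hs
      calc z = z * (φ c ^ N * u ^ N) := by
              rw [← mul_pow, mul_comm (φ c) u, huc, one_pow, mul_one]
        _ = z * φ c ^ N * u ^ N := by ring
        _ = φ b * u ^ N := by rw [h1]
    have : z ∈ T := by
      rw [hz]
      exact mul_mem (main (δ b).natDegree b le_rfl) (pow_mem (hmemT u huR) N)
    obtain ⟨p, hp⟩ := this
    exact ⟨p, hp⟩
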